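/- For paths u,v,x,y in E with r(u)=r(v) and r(x)=r(y), J_{uv⁻¹} ≤_J J_{xy⁻¹} holds in G(E) if and only if there is a path t in E with s(t) = r(x) and r(t) = r(u). -/

import Mathlib

universe u

/-- A directed graph: vertices, edges, source and range maps. -/
structure DGraph : Type (u + 1) where
  V : Type u
  Ed : Type u
  src : Ed → V
  rng : Ed → V

/-- The end vertex of a list of edges started at `v` (ignoring composability). -/
def DGraph.ranAux (G : DGraph) : G.V → List G.Ed → G.V
  | v, [] => v
  | _, e :: es => DGraph.ranAux G (G.rng e) es

/-- The edges `l` form a composable path starting at `v`. -/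
def DGraph.Chain (G : DGraph) : G.V → List G.Ed → Prop
  | _, [] => True
  | v, e :: es => G.src e = v ∧ DGraph.Chain G (G.rng e) es

theorem DGraph.ranAux_append (G : DGraph) (v : G.V) (l1 l2 : List G.Ed) :
    G.ranAux v (l1 ++ l2) = G.ranAux (G.ranAux v l1) l2 := by
  induction l1 generalizing v with
  | nil => rfl
  | cons e es ih => exact ih (G.rng e)

theorem DGraph.chain_append (G : DGraph) {v : G.V} {l1 l2 : List G.Ed}
    (h1 : G.Chain v l1) (h2 : G.Chain (G.ranAux v l1) l2) : G.Chain v (l1 ++ l2) := by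
  induction l1 generalizing v with
  | nil => exact h2
  | cons e es ih => exact ⟨h1.1, ih h1.2 h2⟩

theorem DGraph.chain_append_right (G : DGraph) {v : G.V} {l1 l2 : List G.Ed}
    (h : G.Chain v (l1 ++ l2)) : G.Chain (G.ranAux v l1) l2 := by
  induction l1 generalizing v with
  | nil => exact h
  | cons e es ih => exact ih h.2

/-- A (finite, directed) path in the graph `G`: a start vertex together
with a composable list of edges. Vertices are the paths of length `0`. -/
structure GPath (G : DGraph.{u}) : Type u where
  start : G.V
  edges : List G.Ed
  chain : G.Chain start edges

namespace GPath

variable {G : DGraph}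

/-- The range (end vertex) of a path. -/
def ran (p : GPath G) : G.V := G.ranAux p.start p.edges

/-- The path of length zero at a vertex. -/
def ofVertex (G : DGraph) (v : G.V) : GPath G := ⟨v, [], trivial⟩

/-- The path of length one given by an edge. -/
def ofEdge (G : DGraph) (e : G.Ed) : GPath G := ⟨G.src e, [e], ⟨rfl, trivial⟩⟩

@[simp] theorem ofVertex_ran (G : DGraph) (v : G.V) : (ofVertex G v).ran = v := rfl

@[simp] theorem ofEdge_ran (G : DGraph) (e : G.Ed) : (ofEdge G e).ran = G.rng e := rfl

/-- Concatenation of composable paths. -/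
def append (p q : GPath G) (h : p.ran = q.start) : GPath G :=
  ⟨p.start, p.edges ++ q.edges,
    G.chain_append p.chain (by
      show G.Chain (G.ranAux p.start p.edges) q.edges
      have : G.ranAux p.start p.edges = q.start := h
      rw [this]; exact q.chain)⟩

@[simp] theorem append_ran (p q : GPath G) (h : p.ran = q.start) :
    (p.append q h).ran = q.ran := by
  show G.ranAux p.start (p.edges ++ q.edges) = q.ran
  rw [G.ranAux_append]
  have : G.ranAux p.start p.edges = q.start := h
  rw [this]; rfl

/-- `y` is an initial segment of the path `p`. -/
def IsPrefixOf (y p : GPath G) : Prop := y.start = p.start ∧ y.edges <+: p.edges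

/-- The remainder `t` of `p` after its initial segment `y`, so that `p = y ++ t`. -/
def remainder (y p : GPath G) (h : y.IsPrefixOf p) : GPath G :=
  ⟨y.ran, p.edges.drop y.edges.length, by
    obtain ⟨l2, hl⟩ := h.2
    rw [← hl, List.drop_left]
    show G.Chain (G.ranAux y.start y.edges) l2
    rw [h.1]
    exact G.chain_append_right (v := p.start) (l1 := y.edges) (l2 := l2)
      (by rw [hl]; exact p.chain)⟩

@[simp] theorem remainder_ran (y p : GPath G) (h : y.IsPrefixOf p) :
    (y.remainder p h).ran = p.ran := by
  obtain ⟨l2, hl⟩ := h.2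
  show G.ranAux y.ran (p.edges.drop y.edges.length) = p.ran
  rw [← hl, List.drop_left]
  show G.ranAux (G.ranAux y.start y.edges) l2 = p.ran
  rw [h.1, ← G.ranAux_append, hl]
  rfl

end GPath

/-- The graph inverse semigroup of `G` (in normal form): its elements are zero together
with the elements `x * y⁻¹` for paths `x`, `y` with the same range. -/
inductive GIS (G : DGraph.{u}) : Type u where
  | zero : GIS G
  | mk (x y : GPath G) (h : x.ran = y.ran) : GIS G

instance (G : DGraph) : Zero (GIS G) := ⟨GIS.zero⟩

open scoped Classical in
/-- Multiplication in the graph inverse semigroup. -/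
noncomputable def GIS.gmul {G : DGraph} : GIS G → GIS G → GIS G
  | GIS.zero, _ => GIS.zero
  | GIS.mk _ _ _, GIS.zero => GIS.zero
  | GIS.mk x y hxy, GIS.mk p q hpq =>
    if h1 : y.IsPrefixOf p then
      GIS.mk (x.append (y.remainder p h1) hxy) q
        (by exact (GPath.append_ran x _ hxy).trans ((GPath.remainder_ran y p h1).trans hpq))
    else if h2 : p.IsPrefixOf y then
      GIS.mk x (q.append (p.remainder y h2) hpq.symm)
        (by exact hxy.trans ((GPath.remainder_ran p y h2).symm.trans (GPath.append_ran q _ hpq.symm).symm))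
    else GIS.zero

noncomputable instance (G : DGraph) : Mul (GIS G) := ⟨GIS.gmul⟩

/-- The element of `GIS G` corresponding to a vertex `v` (i.e. `v = v * v⁻¹`). -/
def vertexEl (G : DGraph) (v : G.V) : GIS G :=
  GIS.mk (GPath.ofVertex G v) (GPath.ofVertex G v) rfl

/-- The element of `GIS G` corresponding to an edge `e` (i.e. `e = e * r(e)⁻¹`). -/
def edgeEl (G : DGraph) (e : G.Ed) : GIS G :=
  GIS.mk (GPath.ofEdge G e) (GPath.ofVertex G (G.rng e)) rfl

/-- The inverse operation on `GIS G`: `(x y⁻¹)⁻¹ = y x⁻¹`. -/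
def GIS.inv {G : DGraph} : GIS G → GIS G
  | GIS.zero => GIS.zero
  | GIS.mk x y h => GIS.mk y x h.symm

/-- `a` lies in the principal left ideal generated by `b` (`S¹a ⊆ S¹b`). -/
def GreenLeL {G : DGraph} (a b : GIS G) : Prop := a = b ∨ ∃ c, a = c * b

/-- `a` lies in the principal right ideal generated by `b` (`aS¹ ⊆ bS¹`). -/
def GreenLeR {G : DGraph} (a b : GIS G) : Prop := a = b ∨ ∃ c, a = b * c

/-- `a` lies in the principal two-sided ideal generated by `b` (`S¹aS¹ ⊆ S¹bS¹`). -/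
def GreenLeJ {G : DGraph} (a b : GIS G) : Prop :=
  a = b ∨ (∃ c, a = c * b) ∨ (∃ c, a = b * c) ∨ (∃ c d, a = c * b * d)

/-- Green's `L`-relation. -/
def GreenEqL {G : DGraph} (a b : GIS G) : Prop := GreenLeL a b ∧ GreenLeL b a

/-- Green's `R`-relation. -/
def GreenEqR {G : DGraph} (a b : GIS G) : Prop := GreenLeR a b ∧ GreenLeR b a

/-- Green's `J`-relation. -/
def GreenEqJ {G : DGraph} (a b : GIS G) : Prop := GreenLeJ a b ∧ GreenLeJ b a

/-- There is a (possibly trivial) directed path from `v` to `w` in `G`. -/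
def GConnected (G : DGraph) (v w : G.V) : Prop := ∃ t : GPath G, t.start = v ∧ t.ran = w

/-- `I` is a (two-sided) ideal of `GIS G`. -/
def GISIdeal {G : DGraph} (I : Set (GIS G)) : Prop :=
  ∀ a ∈ I, ∀ c : GIS G, a * c ∈ I ∧ c * a ∈ I

/-- `R` is the Rees congruence of some ideal `I`, i.e. `R = (I × I) ∪ Δ`. -/
def IsReesCon {G : DGraph} (R : Con (GIS G)) : Prop :=
  ∃ I : Set (GIS G), GISIdeal I ∧ ∀ a b : GIS G, R a b ↔ (a ∈ I ∧ b ∈ I) ∨ a = b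

/-- The only congruences on `GIS G` are the universal one and the diagonal. -/
def CongFree (G : DGraph) : Prop :=
  ∀ R : Con (GIS G), (∀ a b : GIS G, R a b) ∨ (∀ a b : GIS G, R a b ↔ a = b)

/-- The natural partial order on the inverse semigroup `GIS G`:
`a ≤ b` iff `a = ε * b` for some idempotent `ε`. -/
def natLe {G : DGraph} (a b : GIS G) : Prop := ∃ ε : GIS G, ε * ε = ε ∧ a = ε * b

/-- The graph obtained from `G` by deleting the vertices in `S` and all
edges incident to them. -/
def DGraph.delete (G : DGraph) (S : Set G.V) : DGraph where
  V := {v : G.V // v ∉ S}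
  Ed := {e : G.Ed // G.src e ∉ S ∧ G.rng e ∉ S}
  src e := ⟨G.src e.1, e.2.1⟩
  rng e := ⟨G.rng e.1, e.2.2⟩

/-- The graph with a single vertex and `n` loops; its graph inverse semigroup
is the polycyclic monoid `Pₙ`. -/
def polyGraph (n : ℕ) : DGraph :=
  ⟨PUnit, Fin n, fun _ => PUnit.unit, fun _ => PUnit.unit⟩

theorem GPath.ext' {G : DGraph} {p q : GPath G} (h1 : p.start = q.start)
    (h2 : p.edges = q.edges) : p = q := by
  cases p; cases q
  dsimp at h1 h2
  subst h1; subst h2; rfl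

theorem GIS.mk_congr {G : DGraph} {x1 y1 x2 y2 : GPath G} (hx : x1 = x2) (hy : y1 = y2)
    {h1 : x1.ran = y1.ran} {h2 : x2.ran = y2.ran} :
    GIS.mk x1 y1 h1 = GIS.mk x2 y2 h2 := by
  subst hx; subst hy; rfl

open scoped Classical in
theorem GIS.mul_mk_mk {G : DGraph} (x y : GPath G) (hxy : x.ran = y.ran)
    (p q : GPath G) (hpq : p.ran = q.ran) :
    GIS.mk x y hxy * GIS.mk p q hpq =
      (if h1 : y.IsPrefixOf p then
        GIS.mk (x.append (y.remainder p h1) hxy) q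
          (by exact (GPath.append_ran x _ hxy).trans ((GPath.remainder_ran y p h1).trans hpq))
      else if h2 : p.IsPrefixOf y then
        GIS.mk x (q.append (p.remainder y h2) hpq.symm)
          (by exact hxy.trans ((GPath.remainder_ran p y h2).symm.trans (GPath.append_ran q _ hpq.symm).symm))
      else GIS.zero) := rfl

theorem GPath.append_edges {G : DGraph} (p q : GPath G) (h : p.ran = q.start) :
    (p.append q h).edges = p.edges ++ q.edges := rfl

theorem GPath.append_start {G : DGraph} (p q : GPath G) (h : p.ran = q.start) :
    (p.append q h).start = p.start := rfl

theorem GPath.remainder_edges {G : DGraph} (y p : GPath G) (h : y.IsPrefixOf p) :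
    (y.remainder p h).edges = p.edges.drop y.edges.length := rfl

theorem GPath.remainder_start {G : DGraph} (y p : GPath G) (h : y.IsPrefixOf p) :
    (y.remainder p h).start = y.ran := rfl

theorem GIS.mk_mul_cancel {G : DGraph} (a w : GPath G) (haw : a.ran = w.ran)
    (q : GPath G) (hwq : w.ran = q.ran) :
    GIS.mk a w haw * GIS.mk w q hwq = GIS.mk a q (haw.trans hwq) := by
  have hp : w.IsPrefixOf w := ⟨rfl, List.prefix_refl _⟩
  rw [GIS.mul_mk_mk, dif_pos hp]
  refine GIS.mk_congr ?_ rfl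
  exact GPath.ext' rfl (by show a.edges ++ w.edges.drop w.edges.length = a.edges; simp [GPath.append_edges, GPath.remainder_edges])

theorem GIS.mul_quot {G : DGraph} (a b w q : GPath G)
    (hw : b.ran = w.start) (hq : b.ran = q.ran) (ha : a.ran = w.ran)
    (hq2 : q.ran = w.start) :
    GIS.mk a (b.append w hw) (by rw [GPath.append_ran]; exact ha) * GIS.mk b q hq =
      GIS.mk a (q.append w hq2) (by rw [GPath.append_ran]; exact ha) := by
  rw [GIS.mul_mk_mk]
  by_cases hp : (b.append w hw).IsPrefixOf b
  · have hwe : w.edges = [] := by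
      have hlen : (b.edges ++ w.edges).length ≤ b.edges.length := hp.2.length_le
      simpa using hlen
    rw [dif_pos hp]
    refine GIS.mk_congr ?_ ?_
    · refine GPath.ext' rfl ?_
      show a.edges ++ b.edges.drop (b.edges ++ w.edges).length = a.edges
      simp [GPath.append_edges, GPath.remainder_edges, hwe]
    · refine (GPath.ext' (p := q.append w hq2) (q := q) rfl ?_).symm
      simp [GPath.append_edges, hwe]
  · have hp2 : b.IsPrefixOf (b.append w hw) := ⟨rfl, ⟨w.edges, rfl⟩⟩
    rw [dif_neg hp, dif_pos hp2]
    refine GIS.mk_congr rfl ?_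
    refine GPath.ext' rfl ?_
    show q.edges ++ (b.edges ++ w.edges).drop b.edges.length = q.edges ++ w.edges
    simp [GPath.append_edges, GPath.remainder_edges, List.drop_left]

theorem GIS.key_left {G : DGraph} (c : GIS G) (x y : GPath G) (hx : x.ran = y.ran)
    (a b : GPath G) (hab : a.ran = b.ran)
    (h : c * GIS.mk x y hx = GIS.mk a b hab) :
    ∃ t : GPath G, t.start = x.ran ∧ t.ran = a.ran := by
  cases c with
  | zero => exact absurd h (fun h => nomatch h)
  | mk p q hpq =>
    rw [GIS.mul_mk_mk] at h
    by_cases h1 : q.IsPrefixOf x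
    · rw [dif_pos h1] at h
      injection h with ha hb
      exact ⟨GPath.ofVertex G x.ran, rfl, by rw [← ha]; exact ((GPath.append_ran p (q.remainder x h1) hpq).trans (GPath.remainder_ran q x h1)).symm⟩
    · rw [dif_neg h1] at h
      by_cases h2 : x.IsPrefixOf q
      · rw [dif_pos h2] at h
        injection h with ha hb
        refine ⟨x.remainder q h2, rfl, ?_⟩
        rw [GPath.remainder_ran, ← ha]
        exact hpq.symm
      · rw [dif_neg h2] at h
        exact absurd h (fun h => nomatch h)

theorem GIS.key_right {G : DGraph} (d : GIS G) (a b : GPath G) (hab : a.ran = b.ran)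
    (u v : GPath G) (huv : u.ran = v.ran)
    (h : GIS.mk a b hab * d = GIS.mk u v huv) :
    ∃ t : GPath G, t.start = b.ran ∧ t.ran = u.ran := by
  cases d with
  | zero => exact absurd h (fun h => nomatch h)
  | mk p q hpq =>
    rw [GIS.mul_mk_mk] at h
    by_cases h1 : b.IsPrefixOf p
    · rw [dif_pos h1] at h
      injection h with ha hb
      refine ⟨b.remainder p h1, rfl, ?_⟩
      rw [GPath.remainder_ran, ← ha]
      exact ((GPath.append_ran _ _ _).trans (GPath.remainder_ran _ _ _)).symm
    · rw [dif_neg h1] at h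
      by_cases h2 : p.IsPrefixOf b
      · rw [dif_pos h2] at h
        injection h with ha hb
        exact ⟨GPath.ofVertex G b.ran, rfl, by rw [← ha]; simp [← hab]⟩
      · rw [dif_neg h2] at h
        exact absurd h (fun h => nomatch h)

/-- For paths `u,v,x,y` with `r(u)=r(v)` and `r(x)=r(y)`,
`J_{uv⁻¹} ≤_J J_{xy⁻¹}` in `G(E)` iff there is a path `t` with `s(t) = r(x)` and
`r(t) = r(u)`. -/
theorem stmt4 (G : DGraph) (u v x y : GPath G) (hu : u.ran = v.ran) (hx : x.ran = y.ran) :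
    GreenLeJ (GIS.mk u v hu) (GIS.mk x y hx) ↔
      ∃ t : GPath G, t.start = x.ran ∧ t.ran = u.ran := by
  constructor
  · intro h
    rcases h with h | ⟨c, h⟩ | ⟨d, h⟩ | ⟨c, d, h⟩
    · injection h with h1 h2
      exact ⟨GPath.ofVertex G x.ran, rfl, by rw [h1]; simp⟩
    · exact GIS.key_left c x y hx u v hu h.symm
    · obtain ⟨t, h1, h2⟩ := GIS.key_right d x y hx u v hu h.symm
      exact ⟨t, h1.trans hx.symm, h2⟩
    · rcases hm : c * GIS.mk x y hx with _ | ⟨a, b, hab⟩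
      · rw [hm] at h
        have hz : (GIS.zero : GIS G) * d = GIS.zero := by cases d <;> rfl
        rw [hz] at h
        exact absurd h (fun h => nomatch h)
      · rw [hm] at h
        obtain ⟨t1, ht1s, ht1r⟩ := GIS.key_left c x y hx a b hab hm
        obtain ⟨t2, ht2s, ht2r⟩ := GIS.key_right d a b hab u v hu h.symm
        refine ⟨t1.append t2 (by rw [ht1r, hab, ← ht2s]), ht1s, ?_⟩
        rw [GPath.append_ran]
        exact ht2r
  · rintro ⟨t, ht1, ht2⟩
    right; right; right
    have hxt : x.ran = t.start := ht1.symm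
    have hyt : y.ran = t.start := by rw [← hx]; exact hxt
    refine ⟨GIS.mk u (x.append t hxt) (by rw [GPath.append_ran, ht2]),
      GIS.mk (y.append t hyt) v (by rw [GPath.append_ran, ht2, hu]), ?_⟩
    rw [GIS.mul_quot u x t y hxt hx ht2.symm hyt,
      GIS.mk_mul_cancel u (y.append t hyt) (by rw [GPath.append_ran, ht2]) v
        (by rw [GPath.append_ran, ht2, hu])]
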